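/- Overall correctness of compilation: in a program over finite algebraic data types all of whose functions are total, every expression p of the input language is compiled correctly, i.e. for every abstract environment e and every assignment σ: decode(avalue(e, compile(p)), σ) = cvalue(decode(e,σ), p). -/

import Mathlib

/-- Abstract values over propositional variables `V`: a list of (semantic) formulas
(the *flags*) together with a list of abstract values (the *arguments*). -/
inductive AVal (V : Type) : Type where
  | mk : List ((V → Bool) → Bool) → List (AVal V) → AVal V

/-- The flags of an abstract value. -/
def AVal.flags {V : Type} : AVal V → List ((V → Bool) → Bool)
  | .mk f _ => f

/-- The arguments of an abstract value. -/
def AVal.args {V : Type} : AVal V → List (AVal V)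
  | .mk _ a => a

/-- A signature: every type symbol `T` gets a nonempty finite list of constructors,
each given by its finite list of argument type symbols. -/
structure Signature (τ : Type) where
  ctors : τ → List (List τ)
  ctors_ne : ∀ T, ctors T ≠ []

/-- Untyped data terms; the first component is the (1-based) rank of the
constructor. -/
inductive Value : Type where
  | mk : ℕ → List Value → Value

/-- Well-typed concrete values of type `T`: `C_i(v_1, …, v_n)` where `C_i` is the
`i`-th constructor of `T` with argument types `T_1, …, T_n` and each `v_j` is a
well-typed value of type `T_j`. -/
inductive WT {τ : Type} (sig : Signature τ) : τ → Value → Prop where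
  | mk {T : τ} {i : ℕ} {argTys : List τ} {vals : List Value} :
      1 ≤ i → (sig.ctors T)[i - 1]? = some argTys →
      List.Forall₂ (WT sig) argTys vals → WT sig T (.mk i vals)

/-- `numeric n w = some i` iff `w` has a (unique) prefix `u ∈ S n` of lexicographic
rank `i` in `S n`; extra bits beyond the prefix are ignored. -/
def numeric : ℕ → List Bool → Option ℕ
  | 0, _ => none
  | 1, _ => some 1
  | _ + 2, [] => none
  | n + 2, false :: w => numeric ((n + 2 + 1) / 2) w
  | n + 2, true :: w => (numeric ((n + 2) / 2) w).map (fun i => (n + 2 + 1) / 2 + i)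
termination_by n _ => n
decreasing_by all_goals omega

/-- `strOf n i` is the element of `S n` of lexicographic rank `i` (for `1 ≤ i ≤ n`). -/
def strOf : ℕ → ℕ → List Bool
  | 0, _ => []
  | 1, _ => []
  | n + 2, i =>
      if i ≤ (n + 2 + 1) / 2 then false :: strOf ((n + 2 + 1) / 2) i
      else true :: strOf ((n + 2) / 2) (i - (n + 2 + 1) / 2)
termination_by n _ => n
decreasing_by all_goals omega
mutual
  /-- Encoding of a concrete value of type `T` as an abstract value: the flags are
  constant formulas representing the rank-`i` element of `S c(T)`, and the arguments
  are the encodings of the constructor arguments at their respective types. -/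
  def encode {V τ : Type} (sig : Signature τ) : τ → Value → AVal V
    | T, .mk i vals =>
        .mk ((strOf (sig.ctors T).length i).map (fun b => fun _ => b))
          (encodeList sig ((sig.ctors T).getD (i - 1) []) vals)
  termination_by _ v => sizeOf v

  /-- Pointwise encoding of a list of values at a list of types. -/
  def encodeList {V τ : Type} (sig : Signature τ) : List τ → List Value → List (AVal V)
    | t :: ts, v :: vs => encode sig t v :: encodeList sig ts vs
    | _, _ => []
  termination_by _ vs => sizeOf vs
end

mutual
  /-- Decoding of an abstract value at type `T` under an assignment `σ` (a partial
  function): the flags are evaluated under `σ`; if the resulting bit string has a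
  prefix in `S c(T)` determining constructor rank `i` of `T`, and there are enough
  arguments, the first arguments are decoded at the argument types of the `i`-th
  constructor of `T`; otherwise decoding is undefined. -/
  def decode {V τ : Type} (sig : Signature τ) : τ → AVal V → (V → Bool) → Option Value
    | T, .mk flags args, σ =>
        match numeric (sig.ctors T).length (flags.map (fun f => f σ)) with
        | none => none
        | some i =>
            match (sig.ctors T)[i - 1]? with
            | none => none
            | some argTys =>
                if argTys.length ≤ args.length then
                  (decodeList sig argTys args σ).map (Value.mk i)
                else none
  termination_by _ a _ => sizeOf a

  /-- Pointwise decoding of (a prefix of) a list of abstract values at a list of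
  types. -/
  def decodeList {V τ : Type} (sig : Signature τ) :
      List τ → List (AVal V) → (V → Bool) → Option (List Value)
    | [], _, _ => some []
    | _ :: _, [], _ => none
    | t :: ts, a :: as, σ =>
        match decode sig t a σ with
        | none => none
        | some v => (decodeList sig ts as σ).map (fun vs => v :: vs)
  termination_by _ as _ => sizeOf as
end
lemma AVal.one_le_sizeOf_list {V : Type} (l : List (AVal V)) : 1 ≤ sizeOf l := by
  cases l <;> simp <;> omega

lemma AVal.sizeOf_getD_le {V : Type} (a : AVal V) (j : ℕ) :
    sizeOf (a.args.getD j (AVal.mk [] [])) ≤ sizeOf a := by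
  cases a with
  | mk f args =>
      simp only [AVal.args]
      by_cases h : j < args.length
      · have hm : args.getD j (AVal.mk [] []) ∈ args := by
          rw [List.getD_eq_getElem _ _ h]; exact List.getElem_mem h
        have := List.sizeOf_lt_of_mem hm
        simp only [AVal.mk.sizeOf_spec]
        have := AVal.one_le_sizeOf_list (V := V) []
        omega
      · rw [List.getD_eq_default _ _ (by omega)]
        simp only [AVal.mk.sizeOf_spec]
        have h1 : 1 ≤ sizeOf f := by cases f <;> simp <;> omega
        have h2 := AVal.one_le_sizeOf_list args
        have h3 := AVal.one_le_sizeOf_list (V := V) []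
        simp at h3 ⊢
        omega

lemma AVal.sizeOf_getD_lt {V : Type} (a : AVal V) (j : ℕ) (h : j < a.args.length) :
    sizeOf (a.args.getD j (AVal.mk [] [])) < sizeOf a := by
  cases a with
  | mk f args =>
      simp only [AVal.args] at h ⊢
      have hm : args.getD j (AVal.mk [] []) ∈ args := by
        rw [List.getD_eq_getElem _ _ h]; exact List.getElem_mem h
      have := List.sizeOf_lt_of_mem hm
      simp only [AVal.mk.sizeOf_spec]
      omega

lemma merge_dec {V : Type} (as : List (AVal V)) (j : ℕ)
    (hj : j < (as.map (fun a => a.args.length)).foldr max 0) :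
    sizeOf (as.map (fun a => a.args.getD j (AVal.mk [] []))) < sizeOf as := by
  induction as with
  | nil => simp at hj
  | cons a as ih =>
      simp only [List.map_cons, List.foldr_cons] at hj
      simp only [List.map_cons, List.cons.sizeOf_spec]
      rcases Nat.lt_or_ge j a.args.length with h | h
      · have h1 := AVal.sizeOf_getD_lt a j h
        have h2 : sizeOf (as.map (fun a => a.args.getD j (AVal.mk [] []))) ≤ sizeOf as := by
          rcases Nat.lt_or_ge j ((as.map (fun a => a.args.length)).foldr max 0) with h' | h'
          · exact Nat.le_of_lt (ih h')
          · clear ih hj; induction as with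
            | nil => simp
            | cons b bs ihb =>
                simp only [List.map_cons, List.foldr_cons] at h' ⊢
                simp only [List.cons.sizeOf_spec]
                have := AVal.sizeOf_getD_le b j
                have := ihb (by omega)
                omega
        omega
      · have hj' : j < (as.map (fun a => a.args.length)).foldr max 0 := by omega
        have := ih hj'
        have := AVal.sizeOf_getD_le a j
        omega

/-- The combining function `merge c f⃗ [a_1, …, a_c]`: its `i`-th flag is the
conjunction over `k` of the implications `numeric c f⃗ = k ⟹ flags_i(a_k)`, and its
`j`-th argument is `merge c f⃗` of the `j`-th arguments of the `a_k` (a missing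
argument being the empty abstract value). -/
def merge {V : Type} (c : ℕ) (fs : List ((V → Bool) → Bool)) (as : List (AVal V)) :
    AVal V :=
  AVal.mk
    ((List.range ((as.map (fun a => a.flags.length)).foldr max 0)).map
      (fun i => fun σ =>
        match numeric c (fs.map (fun f => f σ)) with
        | none => true
        | some k =>
            match as[k - 1]? with
            | none => true
            | some a =>
                match a.flags[i]? with
                | none => true
                | some g => g σ))
    ((List.range ((as.map (fun a => a.args.length)).foldr max 0)).attach.map
      (fun j => merge c fs (as.map (fun a => a.args.getD j.1 (AVal.mk [] [])))))
termination_by sizeOf as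
decreasing_by
  have h := merge_dec as j.1 (by simpa using j.2)
  simpa [List.map_attach_eq_pmap] using h

/-- Expressions of the input language: variables, local bindings, calls of globally
defined functions, constructor applications (the constructor given by its type symbol
and its 1-based rank), and complete pattern matches (one branch, consisting of the
pattern variables and the branch body, per constructor of the discriminant's type). -/
inductive Expr (τ Name FName : Type) : Type where
  | var : Name → Expr τ Name FName
  | lett : Name → Expr τ Name FName → Expr τ Name FName → Expr τ Name FName
  | call : FName → List (Expr τ Name FName) → Expr τ Name FName
  | con : τ → ℕ → List (Expr τ Name FName) → Expr τ Name FName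
  | cases : τ → Expr τ Name FName → List (List Name × Expr τ Name FName) →
      Expr τ Name FName

/-- Expressions of the abstract (compiled) language: variables, local bindings,
calls, abstract constructor applications `C'` (given the number `c` of constructors
of the type and the rank `i` of the constructor), and the compiled form of pattern
matches: `amerge c d bs` evaluates `d` to an abstract value `x`, evaluates each
branch body with the pattern variables bound to the arguments of `x`, and merges the
results according to the flags of `x`. -/
inductive AExpr (Name FName V : Type) : Type where
  | var : Name → AExpr Name FName V
  | lett : Name → AExpr Name FName V → AExpr Name FName V → AExpr Name FName V
  | call : FName → List (AExpr Name FName V) → AExpr Name FName V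
  | mkCon : ℕ → ℕ → List (AExpr Name FName V) → AExpr Name FName V
  | amerge : ℕ → AExpr Name FName V → List (List Name × AExpr Name FName V) →
      AExpr Name FName V

lemma sizeOf_snd_lt_of_mem {Name E : Type} [SizeOf Name] [SizeOf E]
    {bs : List (List Name × E)} {b : List Name × E} (h : b ∈ bs) :
    sizeOf b.2 < sizeOf bs := by
  have h1 := List.sizeOf_lt_of_mem h
  obtain ⟨vs, body⟩ := b
  simp at h1 ⊢
  omega

/-- Compilation of input expressions to abstract expressions. -/
def compile {τ Name FName V : Type} (sig : Signature τ) :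
    Expr τ Name FName → AExpr Name FName V
  | .var x => .var x
  | .lett x a b => .lett x (compile sig a) (compile sig b)
  | .call f as => .call f (as.attach.map (fun e => compile sig e.1))
  | .con T i as => .mkCon (sig.ctors T).length i (as.attach.map (fun e => compile sig e.1))
  | .cases T d bs =>
      .amerge (sig.ctors T).length (compile sig d)
        (bs.attach.map (fun b => (b.1.1, compile sig b.1.2)))
termination_by e => sizeOf e
decreasing_by
  all_goals simp only [Expr.lett.sizeOf_spec, Expr.call.sizeOf_spec,
    Expr.con.sizeOf_spec, Expr.cases.sizeOf_spec]
  · omega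
  · omega
  · have h := List.sizeOf_lt_of_mem e.2; omega
  · have h := List.sizeOf_lt_of_mem e.2; omega
  · omega
  · have h := sizeOf_snd_lt_of_mem b.2; omega

/-- `updEnv env x v` updates the environment `env` at `x` by `v`. -/
def updEnv {Name β : Type} [DecidableEq Name] (env : Name → Option β) (x : Name)
    (v : β) : Name → Option β :=
  fun y => if y = x then some v else env y

/-- The environment binding a list of names pointwise to a list of values
(and nothing else). -/
def bindEnv {Name β : Type} [DecidableEq Name] : List Name → List β → Name → Option β
  | p :: ps, v :: vs, y => if y = p then some v else bindEnv ps vs y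
  | _, _, _ => none

/-- `extEnv vs ws env` extends `env` by binding the names `vs` pointwise
to the values `ws`. -/
def extEnv {Name β : Type} [DecidableEq Name] (vs : List Name) (ws : List β)
    (env : Name → Option β) : Name → Option β :=
  fun y => match bindEnv vs ws y with
    | some v => some v
    | none => env y

/- Strict (call-by-value) big-step evaluation of input expressions with respect to a
program `prog` assigning to (some) function names their formal parameters and body.
In a pattern match, the branch corresponding to the constructor of the discriminant's
value is chosen, with the pattern variables bound to the constructor arguments.
`CEvalList` is the pointwise lifting of `CEval` to lists of expressions. -/
mutual
  /-- Big-step evaluation of input expressions. -/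
  inductive CEval {τ Name FName : Type} [DecidableEq Name]
      (prog : FName → Option (List Name × Expr τ Name FName)) :
      (Name → Option Value) → Expr τ Name FName → Value → Prop where
    | var {env x v} : env x = some v → CEval prog env (.var x) v
    | lett {env x a b u v} : CEval prog env a u →
        CEval prog (updEnv env x u) b v → CEval prog env (.lett x a b) v
    | call {env f args params body vals v} : prog f = some (params, body) →
        CEvalList prog env args vals →
        CEval prog (bindEnv params vals) body v →
        CEval prog env (.call f args) v
    | con {env T i args vals} : CEvalList prog env args vals →
        CEval prog env (.con T i args) (.mk i vals)
    | cases {env T d bs i ws pvs body v} : CEval prog env d (.mk i ws) →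
        bs[i - 1]? = some (pvs, body) →
        CEval prog (extEnv pvs ws env) body v →
        CEval prog env (.cases T d bs) v

  /-- Pointwise lifting of `CEval` to lists. -/
  inductive CEvalList {τ Name FName : Type} [DecidableEq Name]
      (prog : FName → Option (List Name × Expr τ Name FName)) :
      (Name → Option Value) → List (Expr τ Name FName) → List Value → Prop where
    | nil {env} : CEvalList prog env [] []
    | cons {env e v es vs} : CEval prog env e v → CEvalList prog env es vs →
        CEvalList prog env (e :: es) (v :: vs)
end

/- Strict big-step evaluation of abstract expressions with respect to an abstract
program `aprog`.  An abstract constructor application `C'` builds the abstract value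
with the constant flags representing the rank-`i` element of `S c` and the values of
the arguments; `amerge` evaluates the discriminant to `x`, each branch body with the
pattern variables bound to the arguments of `x` (a missing argument being the empty
abstract value), and merges the branch results according to the flags of `x`.
`AEvalList` is the pointwise lifting of `AEval` to lists, and
`AEvalBranches aprog env x bs rs` evaluates the branch bodies `bs` (each with its
pattern variables bound to the arguments of `x`) to the abstract values `rs`. -/
mutual
  /-- Big-step evaluation of abstract expressions. -/
  inductive AEval {Name FName V : Type} [DecidableEq Name]
      (aprog : FName → Option (List Name × AExpr Name FName V)) :
      (Name → Option (AVal V)) → AExpr Name FName V → AVal V → Prop where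
    | var {env x a} : env x = some a → AEval aprog env (.var x) a
    | lett {env x a b u w} : AEval aprog env a u →
        AEval aprog (updEnv env x u) b w → AEval aprog env (.lett x a b) w
    | call {env f args params body avals w} : aprog f = some (params, body) →
        AEvalList aprog env args avals →
        AEval aprog (bindEnv params avals) body w →
        AEval aprog env (.call f args) w
    | mkCon {env c i args avals} : AEvalList aprog env args avals →
        AEval aprog env (.mkCon c i args)
          (.mk ((strOf c i).map (fun b => fun _ => b)) avals)
    | amerge {env c d bs x rs} : AEval aprog env d x →
        AEvalBranches aprog env x bs rs →
        AEval aprog env (.amerge c d bs) (merge c x.flags rs)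

  /-- Pointwise lifting of `AEval` to lists. -/
  inductive AEvalList {Name FName V : Type} [DecidableEq Name]
      (aprog : FName → Option (List Name × AExpr Name FName V)) :
      (Name → Option (AVal V)) → List (AExpr Name FName V) → List (AVal V) → Prop where
    | nil {env} : AEvalList aprog env [] []
    | cons {env e a es as} : AEval aprog env e a → AEvalList aprog env es as →
        AEvalList aprog env (e :: es) (a :: as)

  /-- Evaluation of the branches of a compiled pattern match. -/
  inductive AEvalBranches {Name FName V : Type} [DecidableEq Name]
      (aprog : FName → Option (List Name × AExpr Name FName V)) :
      (Name → Option (AVal V)) → AVal V → List (List Name × AExpr Name FName V) →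
      List (AVal V) → Prop where
    | nil {env x} : AEvalBranches aprog env x [] []
    | cons {env x pvs body r bs rs} :
        AEval aprog
          (extEnv pvs
            ((List.range pvs.length).map (fun j => x.args.getD j (AVal.mk [] [])))
            env)
          body r →
        AEvalBranches aprog env x bs rs →
        AEvalBranches aprog env x ((pvs, body) :: bs) (r :: rs)
end

/-- Pointwise decoding of an abstract environment under a typing environment `Γ` and
an assignment `σ`. -/
def decodeEnv {τ Name V : Type} (sig : Signature τ) (Γ : Name → Option τ)
    (env : Name → Option (AVal V)) (σ : V → Bool) : Name → Option Value :=
  fun y => match Γ y, env y with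
    | some T, some a => decode sig T a σ
    | _, _ => none

/-- An input expression `p` of type `T` (its free variables typed by `Γ`) is
*compiled correctly* if for every abstract environment, every assignment `σ`, every
result `a` of abstract evaluation of `compile p` and every result `v` of concrete
evaluation of `p` in the decoded environment, decoding `a` at `T` under `σ` is
defined and yields `v` — i.e. `decode (avalue (e, compile p), σ) = cvalue (decode
(e, σ), p)`. -/
def CompiledCorrectly {τ Name FName V : Type} [DecidableEq Name]
    (sig : Signature τ) (prog : FName → Option (List Name × Expr τ Name FName))
    (aprog : FName → Option (List Name × AExpr Name FName V))
    (Γ : Name → Option τ) (p : Expr τ Name FName) (T : τ) : Prop :=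
  ∀ (env : Name → Option (AVal V)) (σ : V → Bool) (a : AVal V) (v : Value),
    AEval aprog env (compile sig p) a →
    CEval prog (decodeEnv sig Γ env σ) p v →
    decode sig T a σ = some v

/- Typing of input expressions, relative to function signatures `FSig` (argument
types and result type of each function) and a typing environment `Γ` for the free
variables.  `HasTypeList` is the pointwise lifting to lists of expressions. -/
mutual
  /-- Typing judgment for input expressions. -/
  inductive HasType {τ Name FName : Type} [DecidableEq Name] (sig : Signature τ)
      (FSig : FName → Option (List τ × τ)) :
      (Name → Option τ) → Expr τ Name FName → τ → Prop where
    | var {Γ x T} : Γ x = some T → HasType sig FSig Γ (.var x) T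
    | lett {Γ x a b S T} : HasType sig FSig Γ a S →
        HasType sig FSig (updEnv Γ x S) b T → HasType sig FSig Γ (.lett x a b) T
    | call {Γ f args argTys T} : FSig f = some (argTys, T) →
        HasTypeList sig FSig Γ args argTys → HasType sig FSig Γ (.call f args) T
    | con {Γ T i argTys args} : 1 ≤ i → (sig.ctors T)[i - 1]? = some argTys →
        HasTypeList sig FSig Γ args argTys → HasType sig FSig Γ (.con T i args) T
    | cases {Γ T U d bs} : HasType sig FSig Γ d T →
        bs.length = (sig.ctors T).length →
        (∀ (k : ℕ) (argTys : List τ) (pvs : List Name) (body : Expr τ Name FName),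
          (sig.ctors T)[k]? = some argTys → bs[k]? = some (pvs, body) →
          pvs.length = argTys.length) →
        (∀ (k : ℕ) (argTys : List τ) (pvs : List Name) (body : Expr τ Name FName),
          (sig.ctors T)[k]? = some argTys → bs[k]? = some (pvs, body) →
          HasType sig FSig (extEnv pvs argTys Γ) body U) →
        HasType sig FSig Γ (.cases T d bs) U

  /-- Pointwise lifting of `HasType` to lists of expressions. -/
  inductive HasTypeList {τ Name FName : Type} [DecidableEq Name] (sig : Signature τ)
      (FSig : FName → Option (List τ × τ)) :
      (Name → Option τ) → List (Expr τ Name FName) → List τ → Prop where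
    | nil {Γ} : HasTypeList sig FSig Γ [] []
    | cons {Γ e T es Ts} : HasType sig FSig Γ e T → HasTypeList sig FSig Γ es Ts →
        HasTypeList sig FSig Γ (e :: es) (T :: Ts)
end

section Aux
variable {τ Name FName V : Type}

lemma le_foldr_max {l : List ℕ} {a : ℕ} (h : a ∈ l) : a ≤ l.foldr max 0 := by
  induction l with
  | nil => simp at h
  | cons b bs ih =>
    rcases List.mem_cons.mp h with h | h
    · simp [List.foldr, h]
    · simp only [List.foldr_cons]
      exact le_max_of_le_right (ih h)

lemma numeric_bounds : ∀ (n : ℕ) (w : List Bool) (i : ℕ), numeric n w = some i → 1 ≤ i ∧ i ≤ n := by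
  intro n
  induction n using Nat.strong_induction_on with
  | _ n ih =>
    intro w i h
    match n, w with
    | 0, w => simp [numeric] at h
    | 1, w => simp [numeric] at h; omega
    | (n+2), [] => simp [numeric] at h
    | (n+2), false :: w =>
      rw [numeric] at h
      have := ih ((n+2+1)/2) (by omega) w i h
      omega
    | (n+2), true :: w =>
      rw [numeric] at h
      rcases Option.map_eq_some_iff.mp h with ⟨j, hj, rfl⟩
      have := ih ((n+2)/2) (by omega) w j hj
      omega

lemma numeric_append : ∀ (n : ℕ) (w v : List Bool) (i : ℕ),
    numeric n w = some i → numeric n (w ++ v) = some i := by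
  intro n
  induction n using Nat.strong_induction_on with
  | _ n ih =>
    intro w v i h
    match n, w with
    | 0, w => simp [numeric] at h
    | 1, w => simpa [numeric] using h
    | (n+2), [] => simp [numeric] at h
    | (n+2), false :: w =>
      rw [numeric] at h
      rw [List.cons_append, numeric]
      exact ih ((n+2+1)/2) (by omega) w v i h
    | (n+2), true :: w =>
      rw [numeric] at h
      rw [List.cons_append, numeric]
      rcases Option.map_eq_some_iff.mp h with ⟨j, hj, rfl⟩
      rw [ih ((n+2)/2) (by omega) w v j hj]
      rfl

lemma numeric_strOf : ∀ (c i : ℕ), 1 ≤ i → i ≤ c → numeric c (strOf c i) = some i := by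
  intro c
  induction c using Nat.strong_induction_on with
  | _ c ih =>
    intro i h1 h2
    match c with
    | 0 => omega
    | 1 =>
      rw [strOf, numeric]
      simp only [Option.some.injEq]
      omega
    | (n+2) =>
      rw [strOf]
      split
      · rw [numeric]
        exact ih ((n+2+1)/2) (by omega) i h1 (by omega)
      · rw [numeric]
        rw [ih ((n+2)/2) (by omega) (i - (n+2+1)/2) (by omega) (by omega)]
        simp; omega

end Aux
section Dec
variable {τ Name FName V : Type}

lemma decode_mk (sig : Signature τ) (T : τ) (fl : List ((V → Bool) → Bool))
    (ar : List (AVal V)) (σ : V → Bool) :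
    decode sig T (AVal.mk fl ar) σ =
      match numeric (sig.ctors T).length (fl.map (fun f => f σ)) with
      | none => none
      | some i =>
          match (sig.ctors T)[i - 1]? with
          | none => none
          | some argTys =>
              if argTys.length ≤ ar.length then
                (decodeList sig argTys ar σ).map (Value.mk i)
              else none := by
  rw [decode]

lemma decode_eq_some_iff {sig : Signature τ} {T : τ} {a : AVal V} {σ : V → Bool} {v : Value} :
    decode sig T a σ = some v ↔
      ∃ i argTys vals, numeric (sig.ctors T).length (a.flags.map (fun f => f σ)) = some i ∧
        (sig.ctors T)[i - 1]? = some argTys ∧ argTys.length ≤ a.args.length ∧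
        decodeList sig argTys a.args σ = some vals ∧ v = Value.mk i vals := by
  obtain ⟨fl, ar⟩ := a
  rw [decode_mk]
  simp only [AVal.flags, AVal.args]
  constructor
  · intro h
    split at h
    · exact absurd h (by simp)
    · rename_i i hnum
      split at h
      · exact absurd h (by simp)
      · rename_i argTys hct
        split at h
        · rcases Option.map_eq_some_iff.mp h with ⟨vals, hd, rfl⟩
          exact ⟨i, argTys, vals, hnum, hct, by assumption, hd, rfl⟩
        · exact absurd h (by simp)
  · rintro ⟨i, argTys, vals, hnum, hct, hle, hdl, rfl⟩
    rw [hnum]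
    simp only []
    rw [hct]
    simp only [if_pos hle, hdl]
    rfl

lemma decodeList_forall {sig : Signature τ} {σ : V → Bool} :
    ∀ {Ts : List τ} {as : List (AVal V)} {vs : List Value},
      decodeList sig Ts as σ = some vs →
      vs.length = Ts.length ∧ Ts.length ≤ as.length ∧
        ∀ j (h1 : j < Ts.length) (h2 : j < as.length) (h3 : j < vs.length),
          decode sig Ts[j] as[j] σ = some vs[j] := by
  intro Ts
  induction Ts with
  | nil => intro as vs h; rw [decodeList] at h; simp_all
  | cons t ts ih =>
    intro as vs h
    match as with
    | [] => rw [decodeList] at h; simp at h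
    | a :: as =>
      rw [decodeList] at h
      split at h
      · simp at h
      · rename_i v hv
        rcases Option.map_eq_some_iff.mp h with ⟨vs', hd, rfl⟩
        obtain ⟨hl1, hl2, hp⟩ := ih hd
        refine ⟨by simp [hl1], by simpa using hl2, ?_⟩
        intro j h1 h2 h3
        match j with
        | 0 => simpa using hv
        | j + 1 =>
          simp only [List.getElem_cons_succ]
          exact hp j (by simpa using h1) (by simpa using h2) (by simpa using h3)

lemma decodeList_of_forall {sig : Signature τ} {σ : V → Bool} :
    ∀ {Ts : List τ} {as : List (AVal V)} {vs : List Value}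
      (hle : Ts.length ≤ as.length) (hlv : vs.length = Ts.length),
      (∀ j (h1 : j < Ts.length),
        decode sig Ts[j] (as[j]'(lt_of_lt_of_le h1 hle)) σ = some (vs[j]'(by omega))) →
      decodeList sig Ts as σ = some vs := by
  intro Ts
  induction Ts with
  | nil =>
    intro as vs _ hlv _
    rw [decodeList]
    simp [List.length_eq_zero_iff.mp (by simpa using hlv)]
  | cons t ts ih =>
    intro as vs hle hlv hp
    match as, vs with
    | a :: as, v :: vs =>
      rw [decodeList]
      have h0 := hp 0 (by simp)
      simp only [List.getElem_cons_zero] at h0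
      rw [h0]
      rw [ih (by simpa using hle) (by simpa using hlv)
        (fun j h1 => by exact hp (j+1) (by simpa using h1))]
      rfl
end Dec
section Env
variable {τ Name FName V : Type} [DecidableEq Name]

lemma decodeEnv_upd {sig : Signature τ} {Γ : Name → Option τ} {env : Name → Option (AVal V)}
    {σ : V → Bool} {x : Name} {S : τ} {ua : AVal V} {u : Value}
    (h : decode sig S ua σ = some u) :
    decodeEnv sig (updEnv Γ x S) (updEnv env x ua) σ = updEnv (decodeEnv sig Γ env σ) x u := by
  funext y
  simp only [decodeEnv, updEnv]
  by_cases hy : y = x <;> simp [hy, h]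

lemma bindEnv_trichotomy {sig : Signature τ} {σ : V → Bool} :
    ∀ (pvs : List Name) (Ts : List τ) (as : List (AVal V)) (vs : List Value) (y : Name),
      pvs.length = Ts.length → decodeList sig Ts as σ = some vs →
      (bindEnv pvs Ts y = none ∧ bindEnv pvs as y = none ∧ bindEnv pvs vs y = none) ∨
      (∃ T a v, bindEnv pvs Ts y = some T ∧ bindEnv pvs as y = some a ∧
        bindEnv pvs vs y = some v ∧ decode sig T a σ = some v) := by
  intro pvs
  induction pvs with
  | nil => intro Ts as vs y _ _; left; simp [bindEnv]
  | cons p ps ih =>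
    intro Ts as vs y hlen hdl
    match Ts with
    | t :: ts =>
      match as with
      | [] => rw [decodeList] at hdl; simp at hdl
      | a :: as =>
        rw [decodeList] at hdl
        split at hdl
        · simp at hdl
        · rename_i v hv
          rcases Option.map_eq_some_iff.mp hdl with ⟨vs', hd, rfl⟩
          by_cases hy : y = p
          · right
            exact ⟨t, a, v, by simp [bindEnv, hy], by simp [bindEnv, hy], by simp [bindEnv, hy], hv⟩
          · have := ih ts as vs' y (by simpa using hlen) hd
            simpa [bindEnv, hy] using this

lemma decodeEnv_bind {sig : Signature τ} {σ : V → Bool}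
    {pvs : List Name} {Ts : List τ} {as : List (AVal V)} {vs : List Value}
    (hlen : pvs.length = Ts.length) (hdl : decodeList sig Ts as σ = some vs) :
    decodeEnv sig (bindEnv pvs Ts) (bindEnv pvs as) σ = bindEnv pvs vs := by
  funext y
  rcases bindEnv_trichotomy pvs Ts as vs y hlen hdl with ⟨h1, h2, h3⟩ | ⟨T, a, v, h1, h2, h3, h4⟩ <;>
    simp [decodeEnv, h1, h2, h3, *]

lemma decodeEnv_ext {sig : Signature τ} {Γ : Name → Option τ} {env : Name → Option (AVal V)}
    {σ : V → Bool} {pvs : List Name} {Ts : List τ} {as : List (AVal V)} {vs : List Value}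
    (hlen : pvs.length = Ts.length) (hdl : decodeList sig Ts as σ = some vs) :
    decodeEnv sig (extEnv pvs Ts Γ) (extEnv pvs as env) σ =
      extEnv pvs vs (decodeEnv sig Γ env σ) := by
  funext y
  rcases bindEnv_trichotomy pvs Ts as vs y hlen hdl with ⟨h1, h2, h3⟩ | ⟨T, a, v, h1, h2, h3, h4⟩ <;>
    simp [decodeEnv, extEnv, h1, h2, h3, *]

lemma bindEnv_congr {β : Type} :
    ∀ (pvs : List Name) (as as' : List β),
      (∀ j, j < pvs.length → as[j]? = as'[j]?) → bindEnv pvs as = bindEnv pvs as' := by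
  intro pvs
  induction pvs with
  | nil => intro as as' _; funext y; cases as <;> cases as' <;> simp [bindEnv]
  | cons p ps ih =>
    intro as as' h
    have h0 := h 0 (by simp)
    match as, as' with
    | [], [] => rfl
    | [], _ :: _ => simp at h0
    | _ :: _, [] => simp at h0
    | a :: as, a' :: as' =>
      simp only [List.getElem?_cons_zero, Option.some.injEq] at h0
      subst h0
      have := ih as as' (fun j hj => by simpa using h (j+1) (by simpa using hj))
      funext y
      simp [bindEnv, this]

lemma extEnv_congr {β : Type} {pvs : List Name} {as as' : List β} {env : Name → Option β}
    (h : ∀ j, j < pvs.length → as[j]? = as'[j]?) :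
    extEnv pvs as env = extEnv pvs as' env := by
  funext y
  simp [extEnv, bindEnv_congr pvs as as' h]
end Env
section Merge
variable {τ V : Type}

@[simp] lemma AVal.flags_mk (f : List ((V → Bool) → Bool)) (a : List (AVal V)) :
    (AVal.mk f a).flags = f := rfl

@[simp] lemma AVal.args_mk (f : List ((V → Bool) → Bool)) (a : List (AVal V)) :
    (AVal.mk f a).args = a := rfl

lemma merge_flags_eval (c : ℕ) (fs : List ((V → Bool) → Bool)) (rs : List (AVal V))
    (σ : V → Bool) {k : ℕ} (hk : numeric c (fs.map (fun f => f σ)) = some k)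
    {r : AVal V} (hr : rs[k - 1]? = some r) :
    (merge c fs rs).flags.map (fun f => f σ) =
      r.flags.map (fun f => f σ) ++
        List.replicate ((rs.map (fun a => a.flags.length)).foldr max 0 - r.flags.length) true := by
  have hmem : r ∈ rs := List.mem_of_getElem? hr
  have hle : r.flags.length ≤ (rs.map (fun a => a.flags.length)).foldr max 0 :=
    le_foldr_max (List.mem_map_of_mem hmem)
  rw [merge]
  simp only [AVal.flags_mk]
  apply List.ext_getElem
  · simp; omega
  · intro i h1 h2
    simp only [List.map_map, List.getElem_map, List.getElem_range]
    simp only [List.length_map, List.length_range] at h1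
    simp only [Function.comp, hk, hr]
    by_cases hi : i < r.flags.length
    · have e1 : r.flags[i]? = some (r.flags[i]'hi) := List.getElem?_eq_getElem hi
      rw [List.getElem_append_left (by simpa using hi)]
      simp [e1]
    · have hi' : r.flags.length ≤ i := Nat.le_of_not_lt hi
      have e1 : r.flags[i]? = none := List.getElem?_eq_none hi'
      rw [List.getElem_append_right (by simpa using hi)]
      simp [e1]

lemma merge_args_length (c : ℕ) (fs : List ((V → Bool) → Bool)) (rs : List (AVal V)) :
    (merge c fs rs).args.length = (rs.map (fun a => a.args.length)).foldr max 0 := by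
  rw [merge]; simp

lemma merge_args_getElem? (c : ℕ) (fs : List ((V → Bool) → Bool)) (rs : List (AVal V))
    {j : ℕ} (h : j < (rs.map (fun a => a.args.length)).foldr max 0) :
    (merge c fs rs).args[j]? =
      some (merge c fs (rs.map (fun a => a.args.getD j (AVal.mk [] [])))) := by
  rw [merge]
  simp only [AVal.args_mk]
  rw [List.getElem?_map]
  rw [List.getElem?_attach]
  simp [List.getElem?_range h]
lemma merge_decode_aux (sig : Signature τ) (σ : V → Bool) :
    ∀ (n : ℕ) (r : AVal V), sizeOf r ≤ n →
      ∀ (c : ℕ) (fs : List ((V → Bool) → Bool)) (k : ℕ) (rs : List (AVal V)) (U : τ) (v : Value),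
        numeric c (fs.map (fun f => f σ)) = some k → rs[k - 1]? = some r →
        decode sig U r σ = some v → decode sig U (merge c fs rs) σ = some v := by
  intro n
  induction n with
  | zero =>
    intro r hr
    obtain ⟨fl, ar⟩ := r
    simp at hr
  | succ n ih =>
    intro r hn c fs k rs U v hk hr hdec
    rcases decode_eq_some_iff.mp hdec with ⟨j, argTys, vals, hnum, hct, hle, hdl, rfl⟩
    apply decode_eq_some_iff.mpr
    refine ⟨j, argTys, vals, ?_, hct, ?_, ?_, rfl⟩
    · rw [merge_flags_eval c fs rs σ hk hr]
      exact numeric_append _ _ _ _ hnum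
    · rw [merge_args_length]
      have hmem : r ∈ rs := List.mem_of_getElem? hr
      have hh : r.args.length ≤ (rs.map (fun a => a.args.length)).foldr max 0 :=
        le_foldr_max (List.mem_map_of_mem hmem)
      omega
    · -- decodeList over merged arguments
      obtain ⟨hlv, hla, hp⟩ := decodeList_forall hdl
      have hmem : r ∈ rs := List.mem_of_getElem? hr
      have hLa : r.args.length ≤ (rs.map (fun a => a.args.length)).foldr max 0 :=
        le_foldr_max (List.mem_map_of_mem hmem)
      have hlen' : argTys.length ≤ (merge c fs rs).args.length := by
        rw [merge_args_length]; omega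
      apply decodeList_of_forall hlen' hlv
      intro i h1
      have hi2 : i < (rs.map (fun a => a.args.length)).foldr max 0 := by omega
      have hA : (merge c fs rs).args[i]'(by omega) =
          merge c fs (rs.map (fun a => a.args.getD i (AVal.mk [] []))) := by
        have := merge_args_getElem? c fs rs hi2
        rw [List.getElem?_eq_getElem (by omega)] at this
        exact Option.some.inj this
      rw [hA]
      have hri : i < r.args.length := by omega
      have hrs' : (rs.map (fun a => a.args.getD i (AVal.mk [] [])))[k - 1]? =
          some (r.args.getD i (AVal.mk [] [])) := by
        rw [List.getElem?_map, hr]; rfl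
      have hgd : r.args.getD i (AVal.mk [] []) = r.args[i]'hri := List.getD_eq_getElem _ _ hri
      have hsz : sizeOf (r.args.getD i (AVal.mk [] [])) ≤ n := by
        have := AVal.sizeOf_getD_lt r i hri
        omega
      apply ih _ hsz c fs k _ _ _ hk hrs'
      rw [hgd]
      exact hp i h1 (by omega) (by omega)

lemma merge_decode (sig : Signature τ) (σ : V → Bool) {c : ℕ}
    {fs : List ((V → Bool) → Bool)} {k : ℕ} {rs : List (AVal V)} {r : AVal V}
    {U : τ} {v : Value} (hk : numeric c (fs.map (fun f => f σ)) = some k)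
    (hr : rs[k - 1]? = some r) (hdec : decode sig U r σ = some v) :
    decode sig U (merge c fs rs) σ = some v :=
  merge_decode_aux sig σ (sizeOf r) r le_rfl c fs k rs U v hk hr hdec
end Merge
section Main
variable {τ Name FName V : Type} [DecidableEq Name]

lemma aevalBranches_getElem {aprog : FName → Option (List Name × AExpr Name FName V)}
    {env : Name → Option (AVal V)} {x : AVal V} :
    ∀ {bs : List (List Name × AExpr Name FName V)} {rs : List (AVal V)},
      AEvalBranches aprog env x bs rs →
      ∀ {k : ℕ} {pvs : List Name} {body : AExpr Name FName V}, bs[k]? = some (pvs, body) →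
      ∃ r, rs[k]? = some r ∧
        AEval aprog
          (extEnv pvs
            ((List.range pvs.length).map (fun j => x.args.getD j (AVal.mk [] []))) env)
          body r := by
  intro bs
  induction bs with
  | nil => intro rs h k pvs body hk; simp at hk
  | cons b bs ih =>
    intro rs h k pvs body hk
    cases h with
    | cons h1 h2 =>
      match k with
      | 0 =>
        simp only [List.getElem?_cons_zero, Option.some.injEq] at hk
        cases hk
        exact ⟨_, by simp, h1⟩
      | k + 1 =>
        simp only [List.getElem?_cons_succ] at hk
        obtain ⟨r, hr, he⟩ := ih h2 hk
        exact ⟨r, by simpa using hr, he⟩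
end Main
lemma attach_map_pair {τ Name FName V : Type} (sig : Signature τ)
    (bs : List (List Name × Expr τ Name FName)) :
    bs.attach.map (fun b => ((b.1.1, compile sig b.1.2) : List Name × AExpr Name FName V)) =
      bs.map (fun b => (b.1, compile sig b.2)) :=
  List.attach_map_val (l := bs) (f := fun b => (b.1, compile sig b.2))

lemma compile_correct_aux {τ Name FName V : Type} [DecidableEq Name]
    (sig : Signature τ) (prog : FName → Option (List Name × Expr τ Name FName))
    (aprog : FName → Option (List Name × AExpr Name FName V))
    (FSig : FName → Option (List τ × τ))
    (haprog : ∀ f params body, prog f = some (params, body) →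
      aprog f = some (params, compile sig body))
    (hwf : ∀ f params body, prog f = some (params, body) →
      ∃ argTys T, FSig f = some (argTys, T) ∧ params.length = argTys.length ∧
        HasType sig FSig (bindEnv params argTys) body T) :
    ∀ {cenv : Name → Option Value} {p : Expr τ Name FName} {v : Value},
      CEval prog cenv p v →
      ∀ (Γ : Name → Option τ) (T : τ) (aenv : Name → Option (AVal V)) (σ : V → Bool)
        (a : AVal V),
        HasType sig FSig Γ p T → cenv = decodeEnv sig Γ aenv σ →
        AEval aprog aenv (compile sig p) a → decode sig T a σ = some v := by
  intro cenv p v hcev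
  refine CEval.rec (motive_1 := fun cenv p v _ =>
      ∀ (Γ : Name → Option τ) (T : τ) (aenv : Name → Option (AVal V)) (σ : V → Bool)
        (a : AVal V),
        HasType sig FSig Γ p T → cenv = decodeEnv sig Γ aenv σ →
        AEval aprog aenv (compile sig p) a → decode sig T a σ = some v)
    (motive_2 := fun cenv ps vs _ =>
      ∀ (Γ : Name → Option τ) (Ts : List τ) (aenv : Name → Option (AVal V)) (σ : V → Bool)
        (as : List (AVal V)),
        HasTypeList sig FSig Γ ps Ts → cenv = decodeEnv sig Γ aenv σ →
        AEvalList aprog aenv (ps.map (compile sig)) as → decodeList sig Ts as σ = some vs)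
    ?_ ?_ ?_ ?_ ?_ ?_ ?_ hcev
  · -- var
    intro env x v hx Γ T aenv σ a hty henv haev
    subst henv
    cases hty with
    | var hΓ =>
      simp only [compile] at haev
      cases haev with
      | var ha =>
        simpa [decodeEnv, hΓ, ha] using hx
  · -- lett
    intro env x p q u v h1 h2 ih1 ih2 Γ T aenv σ a hty henv haev
    cases hty with
    | lett htyp htyq =>
      rename_i S
      simp only [compile] at haev
      cases haev with
      | lett ha1 ha2 =>
        rename_i ua
        have hu : decode sig S ua σ = some u := ih1 Γ S aenv σ ua htyp henv ha1
        refine ih2 (updEnv Γ x S) T (updEnv aenv x ua) σ a htyq ?_ ha2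
        rw [decodeEnv_upd hu, henv]
  · -- call
    intro env f args params body vals v hprog hargs hbody ihargs ihbody Γ T aenv σ a hty henv haev
    cases hty with
    | call hFSig htyargs =>
      rename_i argTys
      simp only [compile, List.attach_map_val] at haev
      cases haev with
      | call haprog' haargs habody =>
        rename_i params' abody avals
        rw [haprog f params body hprog] at haprog'
        injection haprog' with h
        injection h with h1 h2
        obtain ⟨argTys', T', hFSig', hlenp, htybody⟩ := hwf f params body hprog
        rw [hFSig] at hFSig'
        injection hFSig' with h'
        injection h' with h3 h4
        subst h1; subst h2; subst h3; subst h4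
        have hdl : decodeList sig argTys avals σ = some vals :=
          ihargs Γ argTys aenv σ avals htyargs henv haargs
        exact ihbody (bindEnv params argTys) T (bindEnv params avals) σ a htybody
          (decodeEnv_bind hlenp hdl).symm habody
  · -- con
    intro env T i args vals hargs ihargs Γ T' aenv σ a hty henv haev
    cases hty with
    | con h1 hct htyargs =>
      rename_i argTys
      simp only [compile, List.attach_map_val] at haev
      cases haev with
      | mkCon haargs =>
        rename_i avals
        have hdl : decodeList sig argTys avals σ = some vals :=
          ihargs Γ argTys aenv σ avals htyargs henv haargs
        obtain ⟨hlv, hla, _⟩ := decodeList_forall hdl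
        have hic : i - 1 < (sig.ctors T).length := by
          have := List.getElem?_eq_some_iff.mp hct
          exact this.1
        apply decode_eq_some_iff.mpr
        refine ⟨i, argTys, vals, ?_, hct, by simpa using hla, by simpa using hdl, rfl⟩
        simp only [AVal.flags_mk, List.map_map]
        have : ((fun f => f σ) ∘ fun b => fun _ => b) = (id : Bool → Bool) := rfl
        rw [this, List.map_id]
        exact numeric_strOf _ i h1 (by omega)
  · -- cases
    intro env T d bs i ws pvs body v hd hbsi hbody ihd ihbody Γ U aenv σ a hty henv haev
    cases hty with
    | cases htyd hbslen hplen htybs =>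
      simp only [compile, attach_map_pair] at haev
      cases haev with
      | amerge hx hbr =>
        rename_i x rs
        have hdx : decode sig T x σ = some (Value.mk i ws) := ihd Γ T aenv σ x htyd henv hx
        rcases decode_eq_some_iff.mp hdx with ⟨i', argTys, ws', hnum, hct, hle, hdl, heq⟩
        obtain ⟨rfl, rfl⟩ : i = i' ∧ ws = ws' := by
          cases heq; exact ⟨rfl, rfl⟩
        have hplen' : pvs.length = argTys.length := hplen (i-1) argTys pvs body hct hbsi
        have htybody : HasType sig FSig (extEnv pvs argTys Γ) body U :=
          htybs (i-1) argTys pvs body hct hbsi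
        obtain ⟨hlw, hlaw, _⟩ := decodeList_forall hdl
        have hbsi' : (bs.map (fun b => ((b.1, compile sig b.2) : List Name × AExpr Name FName V)))[i-1]? =
            some (pvs, compile sig body) := by
          rw [List.getElem?_map, hbsi]; rfl
        obtain ⟨r, hrs, hbe⟩ := aevalBranches_getElem hbr hbsi'
        have hext : extEnv pvs
              ((List.range pvs.length).map (fun j => x.args.getD j (AVal.mk [] []))) aenv =
            extEnv pvs x.args aenv := by
          apply extEnv_congr
          intro j hj
          have hjx : j < x.args.length := by omega
          rw [List.getElem?_map, List.getElem?_range (by simpa using hj)]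
          rw [List.getElem?_eq_getElem hjx]
          simp [List.getD_eq_getElem?_getD, List.getElem?_eq_getElem hjx]
        rw [hext] at hbe
        have hdr : decode sig U r σ = some v := by
          refine ihbody (extEnv pvs argTys Γ) U (extEnv pvs x.args aenv) σ r htybody ?_ hbe
          rw [decodeEnv_ext hplen' hdl, henv]
        exact merge_decode sig σ hnum hrs hdr
  · -- nil
    intro env Γ Ts aenv σ as htyl henv haevl
    cases htyl
    cases haevl
    rw [decodeList]
  · -- cons
    intro env e v es vs hcv hcvs ih ihs Γ Ts aenv σ as htyl henv haevl
    cases htyl with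
    | cons hte htes =>
      rename_i t ts
      cases haevl with
      | cons hae haes =>
        rename_i a as'
        have h1 : decode sig t a σ = some v := ih Γ t aenv σ a hte henv hae
        have h2 : decodeList sig ts as' σ = some vs := ihs Γ ts aenv σ as' htes henv haes
        rw [decodeList, h1, h2]
        rfl

/-- Overall correctness of compilation: in a program over finite algebraic data
types, all of whose functions are total and well-typed, and whose abstract version
assigns to each function the compilation of its body, every well-typed expression
`p` of the input language is compiled correctly, i.e. for every abstract environment
`env` and every assignment `σ`:
`decode (avalue (env, compile p), σ) = cvalue (decode (env, σ), p)`. -/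
theorem compile_correct {τ Name FName V : Type} [DecidableEq Name]
    (sig : Signature τ) (prog : FName → Option (List Name × Expr τ Name FName))
    (aprog : FName → Option (List Name × AExpr Name FName V))
    (FSig : FName → Option (List τ × τ))
    -- the abstract program is obtained by compiling the concrete program
    (haprog : ∀ f params body, prog f = some (params, body) →
      aprog f = some (params, compile sig body))
    -- every function of the program is well-typed at its signature
    (hwf : ∀ f params body, prog f = some (params, body) →
      ∃ argTys T, FSig f = some (argTys, T) ∧ params.length = argTys.length ∧
        HasType sig FSig (bindEnv params argTys) body T)
    -- all data types are finite
    (hfin : ∀ T : τ, {v : Value | WT sig T v}.Finite)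
    -- all functions are total: well-typed expressions evaluate in well-typed
    -- environments
    (htotal : ∀ (Γ : Name → Option τ) (p : Expr τ Name FName) (T : τ)
        (env : Name → Option Value), HasType sig FSig Γ p T →
        (∀ x S, Γ x = some S → ∃ v, env x = some v ∧ WT sig S v) →
        ∃ v, CEval prog env p v) :
    ∀ (Γ : Name → Option τ) (p : Expr τ Name FName) (T : τ),
      HasType sig FSig Γ p T → CompiledCorrectly sig prog aprog Γ p T := by
  intro Γ p T hty env σ a v haev hcev
  exact compile_correct_aux sig prog aprog FSig haprog hwf hcev Γ T env σ a hty rfl haev
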